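/- For an ergodic stationary stochastic process S = (S_n) with values in a finite linearly ordered alphabet, for every l ≥ 1, lim_{k→∞} H(R_{k+1}, ..., R_{k+l} | S_1, ..., S_k) = lim_{k→∞} H(S_{k+1}, ..., S_{k+l} | S_1, ..., S_k), where R_n = Σ_{i=1}^n 1[S_i ≤ S_n] are the rank variables. -/

import Mathlib

open MeasureTheory ProbabilityTheory Filter Real

/-- Shannon entropy (base 2) of a random variable. -/
noncomputable def shEntropy {Ω : Type*} [MeasurableSpace Ω] {A : Type*}
    (μ : Measure Ω) (X : Ω → A) : ℝ :=
  -∑' a : A, (μ (X ⁻¹' {a})).toReal * Real.logb 2 (μ (X ⁻¹' {a})).toReal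

/-- Conditional Shannon entropy `H(Y|Z) = Σ_z P(Z=z) H(Y | Z=z)`. -/
noncomputable def condShEntropy {Ω : Type*} [MeasurableSpace Ω] {A B : Type*}
    (μ : Measure Ω) (Y : Ω → A) (Z : Ω → B) : ℝ :=
  ∑' b : B, (μ (Z ⁻¹' {b})).toReal * shEntropy (μ[|Z ⁻¹' {b}]) Y

open Classical in
/-- Rank variable `R_n(ω) = #{i : 1 ≤ i ≤ n, S_i(ω) ≤ S_n(ω)}`. -/
noncomputable def rankVar {Ω A : Type*} [LinearOrder A] (S : ℕ → Ω → A) (n : ℕ) (ω : Ω) : ℕ :=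
  ((Finset.Icc 1 n).filter (fun i => S i ω ≤ S n ω)).card

set_option maxHeartbeats 1000000

noncomputable def h2 (x : ℝ) : ℝ := -(x * Real.logb 2 x)

lemma h2_zero : h2 0 = 0 := by simp [h2]

lemma h2_nonneg {x : ℝ} (h0 : 0 ≤ x) (h1 : x ≤ 1) : 0 ≤ h2 x := by
  have : Real.logb 2 x ≤ 0 := Real.logb_nonpos (by norm_num) h0 h1
  have := mul_nonpos_of_nonneg_of_nonpos h0 this
  simp [h2]; linarith

lemma h2_le_two {x : ℝ} (h0 : 0 ≤ x) (h1 : x ≤ 1) : h2 x ≤ 2 := by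
  rcases eq_or_lt_of_le h0 with h|h
  · simp [h2, ← h]
  · have hlog : Real.log x⁻¹ ≤ x⁻¹ - 1 := Real.log_le_sub_one_of_pos (by positivity)
    rw [Real.log_inv] at hlog
    have hx : -(x * Real.log x) ≤ 1 - x := by
      have := mul_le_mul_of_nonneg_left hlog h0
      rw [mul_sub] at this
      rw [mul_inv_cancel₀ (ne_of_gt h)] at this
      nlinarith
    have hl2 : (0.6931471803 : ℝ) < Real.log 2 := Real.log_two_gt_d9
    have : h2 x = -(x * Real.log x) / Real.log 2 := by
      simp [h2, Real.logb, div_eq_mul_inv]; ring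
    rw [this]
    rw [div_le_iff₀ (by linarith)]
    nlinarith

lemma h2_eq_negMulLog (x : ℝ) : h2 x = (Real.log 2)⁻¹ * Real.negMulLog x := by
  simp [h2, Real.negMulLog, Real.logb, div_eq_mul_inv]; ring

lemma h2_concave : ConcaveOn ℝ (Set.Ici (0:ℝ)) h2 := by
  have := Real.concaveOn_negMulLog.smul (c := (Real.log 2)⁻¹) (by positivity)
  have heq : h2 = fun x => (Real.log 2)⁻¹ • Real.negMulLog x := by
    funext x
    simp [h2_eq_negMulLog, smul_eq_mul]
  rw [heq]; exact this

lemma h2_sum_le {A : Type*} {s : Finset A} {p : A → ℝ} (hp : ∀ a ∈ s, 0 ≤ p a) :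
    h2 (∑ a ∈ s, p a) ≤ ∑ a ∈ s, h2 (p a) := by
  set q := ∑ a ∈ s, p a with hq
  have hq0 : 0 ≤ q := Finset.sum_nonneg hp
  have : h2 q = ∑ a ∈ s, -(p a * Real.logb 2 q) := by
    have : ∑ a ∈ s, -(p a * Real.logb 2 q) = -((∑ a ∈ s, p a) * Real.logb 2 q) := by
      rw [Finset.sum_mul, Finset.sum_neg_distrib]
    rw [this, h2, hq]
  rw [this]
  apply Finset.sum_le_sum
  intro a ha
  rcases eq_or_lt_of_le (hp a ha) with h|h
  · simp [h2, ← h]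
  · have hpa : p a ≤ q := Finset.single_le_sum hp ha
    have : Real.logb 2 (p a) ≤ Real.logb 2 q := Real.logb_le_logb_of_le (b := 2) (by norm_num) h hpa
    have := mul_le_mul_of_nonneg_left this (le_of_lt h)
    simp [h2]; linarith

section SE
variable {Ω : Type*} [MeasurableSpace Ω] (ν : Measure Ω)

lemma shEntropy_eq_tsum {A : Type*} (X : Ω → A) :
    shEntropy ν X = ∑' a : A, h2 ((ν (X ⁻¹' {a})).toReal) := by
  rw [shEntropy, ← tsum_neg]; rfl

lemma shEntropy_nonneg {A : Type*} (X : Ω → A) (hν : ∀ t, ν t ≤ 1) :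
    0 ≤ shEntropy ν X := by
  rw [shEntropy_eq_tsum]
  apply tsum_nonneg
  intro a
  exact h2_nonneg ENNReal.toReal_nonneg
    (ENNReal.toReal_le_of_le_ofReal one_pos.le (by simpa using hν _))

lemma shEntropy_le_card {A : Type*} [Fintype A] (X : Ω → A) (hν : ∀ t, ν t ≤ 1) :
    shEntropy ν X ≤ 2 * Fintype.card A := by
  rw [shEntropy_eq_tsum, tsum_fintype]
  calc ∑ a : A, h2 ((ν (X ⁻¹' {a})).toReal) ≤ ∑ _a : A, (2:ℝ) := by
        apply Finset.sum_le_sum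
        intro a _
        exact h2_le_two ENNReal.toReal_nonneg
          (ENNReal.toReal_le_of_le_ofReal one_pos.le (by simpa using hν _))
    _ = 2 * Fintype.card A := by simp [mul_comm]

lemma shEntropy_congr {A : Type*} {X Y : Ω → A} (h : ∀ᵐ ω ∂ν, X ω = Y ω) :
    shEntropy ν X = shEntropy ν Y := by
  rw [shEntropy_eq_tsum, shEntropy_eq_tsum]
  congr 1
  funext a
  congr 2
  apply measure_congr
  rw [Filter.eventuallyEq_set]
  filter_upwards [h] with ω hω
  simp [Set.mem_preimage, hω]

lemma shEntropy_comp_le {B C : Type*} (Y : Ω → B) (t : Finset B)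
    (hν : ∀ u, ν u ≤ 1)
    (hY : ∀ b ∉ t, Y ⁻¹' {b} = ∅) (hYm : ∀ b, MeasurableSet (Y ⁻¹' {b}))
    (f : B → C) : shEntropy ν (f ∘ Y) ≤ shEntropy ν Y := by
  classical
  rw [shEntropy_eq_tsum, shEntropy_eq_tsum]
  have hR : ∑' b : B, h2 ((ν (Y ⁻¹' {b})).toReal) = ∑ b ∈ t, h2 ((ν (Y ⁻¹' {b})).toReal) := by
    apply tsum_eq_sum
    intro b hb
    rw [hY b hb]; simp [h2_zero]
  have hmem : ∀ ω, Y ω ∈ t := by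
    intro ω
    by_contra h
    exact Set.eq_empty_iff_forall_notMem.mp (hY _ h) ω rfl
  have hL : ∑' c : C, h2 ((ν ((f ∘ Y) ⁻¹' {c})).toReal)
      = ∑ c ∈ t.image f, h2 ((ν ((f ∘ Y) ⁻¹' {c})).toReal) := by
    apply tsum_eq_sum
    intro c hc
    have : (f ∘ Y) ⁻¹' {c} = ∅ := by
      ext ω
      simp only [Set.mem_preimage, Set.mem_singleton_iff, Set.mem_empty_iff_false, iff_false]
      intro hfc
      exact hc (Finset.mem_image.mpr ⟨Y ω, hmem ω, hfc⟩)
    rw [this]; simp [h2_zero]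
  rw [hL, hR]
  have hdecomp : ∀ c, (f ∘ Y) ⁻¹' {c} = ⋃ b ∈ (t.filter (fun b => f b = c)), Y ⁻¹' {b} := by
    intro c
    ext ω
    simp only [Set.mem_preimage, Set.mem_singleton_iff, Set.mem_iUnion, Finset.mem_filter]
    constructor
    · intro h
      exact ⟨Y ω, ⟨hmem ω, h⟩, rfl⟩
    · rintro ⟨b, ⟨_, hfb⟩, hb⟩
      have hyb : Y ω = b := hb
      show f (Y ω) = c
      rw [hyb]; exact hfb
  calc ∑ c ∈ t.image f, h2 ((ν ((f ∘ Y) ⁻¹' {c})).toReal)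
      ≤ ∑ c ∈ t.image f, ∑ b ∈ t.filter (fun b => f b = c), h2 ((ν (Y ⁻¹' {b})).toReal) := by
        apply Finset.sum_le_sum
        intro c _
        have hms : (ν ((f ∘ Y) ⁻¹' {c})).toReal
            = ∑ b ∈ t.filter (fun b => f b = c), (ν (Y ⁻¹' {b})).toReal := by
          rw [hdecomp c, measure_biUnion_finset ?_ (fun b _ => hYm b)]
          · rw [ENNReal.toReal_sum]
            intro b _
            exact (lt_of_le_of_lt (hν _) ENNReal.one_lt_top).ne
          · intro b hb b' hb' hne
            simp only [Function.onFun]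
            apply Set.disjoint_left.mpr
            intro ω h1 h2
            exact hne (by rw [← h1, ← h2])
        rw [hms]
        exact h2_sum_le (fun b _ => ENNReal.toReal_nonneg)
    _ = ∑ b ∈ t, h2 ((ν (Y ⁻¹' {b})).toReal) := by
        apply Finset.sum_fiberwise_of_maps_to
        intro b hb
        exact Finset.mem_image_of_mem f hb
end SE


section CSE
variable {Ω : Type*} [MeasurableSpace Ω] {μ : Measure Ω}

lemma cond_meas_le_one {s : Set Ω} (hs : MeasurableSet s) (hμ : μ s ≠ ⊤) (t : Set Ω) :
    μ[|s] t ≤ 1 := by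
  rw [ProbabilityTheory.cond_apply hs]
  rcases eq_or_ne (μ s) 0 with h0 | h0
  · have : μ (s ∩ t) = 0 := le_antisymm (h0 ▸ measure_mono Set.inter_subset_left) bot_le
    simp [this]
  · calc (μ s)⁻¹ * μ (s ∩ t) ≤ (μ s)⁻¹ * μ s :=
        mul_le_mul_right (measure_mono Set.inter_subset_left) _
      _ = 1 := ENNReal.inv_mul_cancel h0 hμ

lemma condShEntropy_nonneg {A B : Type*} [Fintype B] [IsFiniteMeasure μ]
    (Y : Ω → A) (Z : Ω → B) (hZ : ∀ b, MeasurableSet (Z ⁻¹' {b})) :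
    0 ≤ condShEntropy μ Y Z := by
  rw [condShEntropy, tsum_fintype]
  apply Finset.sum_nonneg
  intro b _
  exact mul_nonneg ENNReal.toReal_nonneg
    (shEntropy_nonneg _ _ (cond_meas_le_one (hZ b) (measure_ne_top _ _)))

lemma condShEntropy_recode {A B B' : Type*} (Y : Ω → A) (Z : Ω → B) (e : B ≃ B') :
    condShEntropy μ Y (fun ω => e (Z ω)) = condShEntropy μ Y Z := by
  rw [condShEntropy, condShEntropy, ← Equiv.tsum_eq e]
  congr 1
  funext b
  have : (fun ω => e (Z ω)) ⁻¹' {e b} = Z ⁻¹' {b} := by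
    ext ω; simp [e.injective.eq_iff]
  rw [this]

lemma condShEntropy_comp_mp {A B : Type*} {T : Ω → Ω} (hT : MeasurePreserving T μ μ)
    (Y : Ω → A) (Z : Ω → B) (hY : ∀ a, MeasurableSet (Y ⁻¹' {a}))
    (hZ : ∀ b, MeasurableSet (Z ⁻¹' {b})) :
    condShEntropy μ (fun ω => Y (T ω)) (fun ω => Z (T ω)) = condShEntropy μ Y Z := by
  rw [condShEntropy, condShEntropy]
  congr 1
  funext b
  have hpre : (fun ω => Z (T ω)) ⁻¹' {b} = T ⁻¹' (Z ⁻¹' {b}) := rfl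
  have hmeas : μ ((fun ω => Z (T ω)) ⁻¹' {b}) = μ (Z ⁻¹' {b}) := by
    rw [hpre, hT.measure_preimage (hZ b).nullMeasurableSet]
  rw [hmeas]
  congr 1
  rw [shEntropy_eq_tsum, shEntropy_eq_tsum]
  congr 1
  funext a
  congr 2
  have hZT : MeasurableSet ((fun ω => Z (T ω)) ⁻¹' {b}) := hT.measurable (hZ b)
  rw [ProbabilityTheory.cond_apply hZT, ProbabilityTheory.cond_apply (hZ b), hmeas]
  congr 1
  have h1 : ((fun ω => Z (T ω)) ⁻¹' {b} ∩ (fun ω => Y (T ω)) ⁻¹' {a})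
      = T ⁻¹' (Z ⁻¹' {b} ∩ Y ⁻¹' {a}) := rfl
  rw [h1, hT.measure_preimage (((hZ b).inter (hY a)).nullMeasurableSet)]

lemma condShEntropy_pair_le {A B C : Type*} [Fintype A] [Fintype B] [Fintype C]
    [IsProbabilityMeasure μ]
    (X : Ω → A) (Z : Ω → B) (W : Ω → C)
    (hX : ∀ a, MeasurableSet (X ⁻¹' {a})) (hZ : ∀ b, MeasurableSet (Z ⁻¹' {b}))
    (hW : ∀ c, MeasurableSet (W ⁻¹' {c})) :
    condShEntropy μ X (fun ω => (Z ω, W ω)) ≤ condShEntropy μ X W := by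
  classical
  rw [condShEntropy, condShEntropy, tsum_fintype, tsum_fintype]
  rw [Fintype.sum_prod_type, Finset.sum_comm]
  apply Finset.sum_le_sum
  intro c _
  -- sets
  set s : Set Ω := W ⁻¹' {c} with hs_def
  have hsm : MeasurableSet s := hW c
  have hrw : ∀ z : B, (fun ω => (Z ω, W ω)) ⁻¹' {(z, c)} = Z ⁻¹' {z} ∩ s := by
    intro z; ext ω; simp [Prod.ext_iff, hs_def, and_comm]
  have hrm : ∀ z : B, MeasurableSet (Z ⁻¹' {z} ∩ s) := fun z => (hZ z).inter hsm
  rcases eq_or_ne (μ s) 0 with hzero | hsc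
  · have hterm : ∀ z : B, (μ ((fun ω => (Z ω, W ω)) ⁻¹' {(z, c)})).toReal = 0 := by
      intro z
      rw [hrw z]
      have : μ (Z ⁻¹' {z} ∩ s) = 0 :=
        le_antisymm (hzero ▸ measure_mono Set.inter_subset_right) bot_le
      simp [this]
    have : ∀ z : B, (μ ((fun ω => (Z ω, W ω)) ⁻¹' {(z, c)})).toReal
        * shEntropy μ[|(fun ω => (Z ω, W ω)) ⁻¹' {(z, c)}] X = 0 := by
      intro z; rw [hterm z, zero_mul]
    rw [Finset.sum_congr rfl (fun z _ => this z)]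
    simp [hzero]
  · -- main concavity case
    have hfin : ∀ u : Set Ω, μ u ≠ ⊤ := fun u => measure_ne_top μ u
    set tw : ℝ := (μ s).toReal with htw_def
    have htw : 0 < tw := ENNReal.toReal_pos hsc (hfin s)
    set lam : B → ℝ := fun z => (μ (Z ⁻¹' {z} ∩ s)).toReal / tw with hlam_def
    have hlam_nonneg : ∀ z, 0 ≤ lam z := fun z => by positivity
    have hpart : ∀ t : Set Ω, MeasurableSet t →
        ∑ z : B, (μ (Z ⁻¹' {z} ∩ s ∩ t)).toReal = (μ (s ∩ t)).toReal := by
      intro t ht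
      have : s ∩ t = ⋃ z ∈ (Finset.univ : Finset B), (Z ⁻¹' {z} ∩ s ∩ t) := by
        ext ω
        simp only [Set.mem_iUnion, Finset.mem_univ, Set.mem_inter_iff, Set.mem_preimage,
          Set.mem_singleton_iff, exists_prop, true_and]
        constructor
        · rintro ⟨h1, h2⟩; exact ⟨Z ω, ⟨rfl, h1⟩, h2⟩
        · rintro ⟨z, ⟨_, h1⟩, h2⟩; exact ⟨h1, h2⟩
      rw [this, measure_biUnion_finset ?_ (fun z _ => ((hrm z).inter ht))]
      · rw [ENNReal.toReal_sum (fun z _ => hfin _)]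
      · intro z _ z' _ hne
        simp only [Function.onFun]
        apply Set.disjoint_left.mpr
        rintro ω ⟨⟨h1, _⟩, _⟩ ⟨⟨h1', _⟩, _⟩
        exact hne (by rw [← h1, ← h1'])
    have hlam_sum : ∑ z : B, lam z = 1 := by
      rw [hlam_def]
      rw [← Finset.sum_div]
      rw [div_eq_one_iff_eq (ne_of_gt htw)]
      have := hpart Set.univ MeasurableSet.univ
      simpa using this
    -- conditional masses
    have hcond : ∀ (u : Set Ω) (hu : MeasurableSet u) (t : Set Ω),
        (μ u).toReal * (μ[|u] t).toReal = (μ (u ∩ t)).toReal := by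
      intro u hu t
      rcases eq_or_ne (μ u) 0 with h0 | h0
      · have : μ (u ∩ t) = 0 := le_antisymm (h0 ▸ measure_mono Set.inter_subset_left) bot_le
        simp [h0, this]
      · rw [ProbabilityTheory.cond_apply hu, ENNReal.toReal_mul, ENNReal.toReal_inv]
        rw [← mul_assoc, mul_inv_cancel₀ (ENNReal.toReal_ne_zero.mpr ⟨h0, hfin u⟩), one_mul]
    set Q : B → A → ℝ := fun z a => (μ[|Z ⁻¹' {z} ∩ s] (X ⁻¹' {a})).toReal with hQ_def
    set P : A → ℝ := fun a => (μ[|s] (X ⁻¹' {a})).toReal with hP_def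
    have hmix : ∀ a : A, ∑ z : B, lam z * Q z a = P a := by
      intro a
      have h1 : ∀ z : B, lam z * Q z a = (μ (Z ⁻¹' {z} ∩ s ∩ X ⁻¹' {a})).toReal / tw := by
        intro z
        rw [hlam_def, hQ_def]
        simp only
        rw [div_mul_eq_mul_div, hcond _ (hrm z)]
      rw [Finset.sum_congr rfl (fun z _ => h1 z), ← Finset.sum_div,
        hpart _ (hX a)]
      have h2' := hcond s hsm (X ⁻¹' {a})
      rw [← htw_def] at h2'
      rw [div_eq_iff (ne_of_gt htw)]
      rw [hP_def]
      simp only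
      linarith
    -- Jensen per a
    have hjensen : ∀ a : A, ∑ z : B, lam z * h2 (Q z a) ≤ h2 (P a) := by
      intro a
      rw [← hmix a]
      have := h2_concave.le_map_sum (t := (Finset.univ : Finset B))
        (w := lam) (p := fun z => Q z a) (fun z _ => hlam_nonneg z) hlam_sum
        (fun z _ => by simp [hQ_def, Set.mem_Ici, ENNReal.toReal_nonneg])
      simpa [smul_eq_mul] using this
    -- assemble
    have hterm : ∀ z : B, (μ ((fun ω => (Z ω, W ω)) ⁻¹' {(z, c)})).toReal
        * shEntropy μ[|(fun ω => (Z ω, W ω)) ⁻¹' {(z, c)}] X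
        = tw * (lam z * ∑ a : A, h2 (Q z a)) := by
      intro z
      have e1 : (μ ((fun ω => (Z ω, W ω)) ⁻¹' {(z, c)})).toReal = tw * lam z := by
        rw [hrw z, hlam_def]
        field_simp
      have e2 : shEntropy μ[|(fun ω => (Z ω, W ω)) ⁻¹' {(z, c)}] X = ∑ a : A, h2 (Q z a) := by
        rw [hrw z, shEntropy_eq_tsum, tsum_fintype]
      rw [e1, e2, mul_assoc]
    rw [Finset.sum_congr rfl (fun z _ => hterm z), ← Finset.mul_sum]
    have e3 : shEntropy μ[|s] X = ∑ a : A, h2 (P a) := by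
      rw [shEntropy_eq_tsum, tsum_fintype]
    rw [e3]
    apply mul_le_mul_of_nonneg_left _ (le_of_lt htw)
    calc ∑ z : B, lam z * ∑ a : A, h2 (Q z a)
        = ∑ a : A, ∑ z : B, lam z * h2 (Q z a) := by
          rw [Finset.sum_comm]
          congr 1; funext z; rw [Finset.mul_sum]
      _ ≤ ∑ a : A, h2 (P a) := Finset.sum_le_sum (fun a _ => hjensen a)
end CSE


section RW
variable {A : Type*} [LinearOrder A]

noncomputable def extWord (d : A) (k l : ℕ) (p : Fin k → A) (x : Fin l → A) (i : ℕ) : A :=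
  if h : i - 1 < k then p ⟨i - 1, h⟩ else if h' : i - 1 - k < l then x ⟨i - 1 - k, h'⟩ else d

noncomputable def rankWord (d : A) (k l : ℕ) (p : Fin k → A) (x : Fin l → A) (j : Fin l) : ℕ :=
  ((Finset.Icc 1 (k + 1 + j.1)).filter
    (fun i => extWord d k l p x i ≤ extWord d k l p x (k + 1 + j.1))).card

lemma extWord_agree {d : A} {k l : ℕ} {p : Fin k → A} {x : Fin l → A}
    {Ω : Type*} {S : ℕ → Ω → A} {ω : Ω}
    (hp : ∀ i : Fin k, S (i.1 + 1) ω = p i) (hx : ∀ j : Fin l, S (k + 1 + j.1) ω = x j)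
    {i : ℕ} (h1 : 1 ≤ i) (h2 : i ≤ k + l) : S i ω = extWord d k l p x i := by
  rw [extWord]
  by_cases h : i - 1 < k
  · rw [dif_pos h]
    have := hp ⟨i - 1, h⟩
    simpa [Nat.sub_add_cancel h1] using this
  · rw [dif_neg h]
    have hik : k + 1 ≤ i := by omega
    have h' : i - 1 - k < l := by omega
    rw [dif_pos h']
    have := hx ⟨i - 1 - k, h'⟩
    have heq : k + 1 + (i - 1 - k) = i := by omega
    rw [heq] at this
    exact this

lemma rankVar_eq_rankWord {d : A} {k l : ℕ} {p : Fin k → A} {x : Fin l → A}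
    {Ω : Type*} {S : ℕ → Ω → A} {ω : Ω}
    (hp : ∀ i : Fin k, S (i.1 + 1) ω = p i) (hx : ∀ j : Fin l, S (k + 1 + j.1) ω = x j)
    (j : Fin l) : rankVar S (k + 1 + j.1) ω = rankWord d k l p x j := by
  classical
  rw [rankVar, rankWord]
  congr 1
  apply Finset.filter_congr
  intro i hi
  rw [Finset.mem_Icc] at hi
  have hj : j.1 < l := j.2
  rw [extWord_agree (d := d) hp hx hi.1 (by omega),
      extWord_agree (d := d) hp hx (by omega) (by omega)]

lemma rankWord_inj {d : A} {k l : ℕ} {p : Fin k → A} {x x' : Fin l → A}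
    (G : A → Prop) (hgood : ∀ a, G a → ∃ i : Fin k, p i = a)
    (hx : ∀ j, G (x j)) (hx' : ∀ j, G (x' j))
    (heq : ∀ j, rankWord d k l p x j = rankWord d k l p x' j) : x = x' := by
  classical
  suffices H : ∀ m, ∀ hm : m < l, x ⟨m, hm⟩ = x' ⟨m, hm⟩ by
    funext j
    have := H j.1 j.2
    simpa using this
  intro m
  induction m using Nat.strong_induction_on with
  | _ m IH =>
    intro hm
    -- agreement of extWord up to k + m
    have hagree : ∀ i, 1 ≤ i → i ≤ k + m → extWord d k l p x i = extWord d k l p x' i := by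
      intro i hi1 hi
      rw [extWord, extWord]
      by_cases h : i - 1 < k
      · rw [dif_pos h, dif_pos h]
      · rw [dif_neg h, dif_neg h]
        by_cases h' : i - 1 - k < l
        · rw [dif_pos h', dif_pos h']
          have hlt : i - 1 - k < m := by omega
          exact IH (i - 1 - k) hlt h'
        · rw [dif_neg h', dif_neg h']
    -- value at the top index
    have htop : ∀ y : Fin l → A, extWord d k l p y (k + 1 + m) = y ⟨m, hm⟩ := by
      intro y
      rw [extWord]
      rw [dif_neg (by omega)]
      have h' : k + 1 + m - 1 - k < l := by omega
      rw [dif_pos h']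
      congr 1
      apply Fin.ext
      simp only [Fin.val_mk]
      omega
    -- counting function over the common prefix
    have hsplit : ∀ y : Fin l → A,
        (∀ i, 1 ≤ i → i ≤ k + m → extWord d k l p y i = extWord d k l p x i) →
        rankWord d k l p y ⟨m, hm⟩ =
          ((Finset.Icc 1 (k + m)).filter (fun i => extWord d k l p x i ≤ y ⟨m, hm⟩)).card + 1 := by
      intro y hy
      rw [rankWord]
      have hIcc : Finset.Icc 1 (k + 1 + m) = insert (k + 1 + m) (Finset.Icc 1 (k + m)) := by
        have h1 : k + 1 + m = (k + m) + 1 := by omega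
        rw [h1, Finset.insert_Icc_right_eq_Icc_add_one (by omega)]
      simp only
      rw [hIcc, Finset.filter_insert]
      rw [if_pos (le_refl _)]
      rw [Finset.card_insert_of_notMem (by
        intro hmem
        have := (Finset.mem_filter.mp hmem).1
        rw [Finset.mem_Icc] at this
        omega)]
      have hfc : (Finset.Icc 1 (k + m)).filter
            (fun i => extWord d k l p y i ≤ extWord d k l p y (k + 1 + m))
          = (Finset.Icc 1 (k + m)).filter (fun i => extWord d k l p x i ≤ y ⟨m, hm⟩) := by
        apply Finset.filter_congr
        intro i hi
        rw [Finset.mem_Icc] at hi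
        rw [hy i hi.1 hi.2, htop y]
      rw [hfc]
    -- strict monotonicity of c on G
    have hmono : ∀ a b, a < b → G b →
        ((Finset.Icc 1 (k + m)).filter (fun i => extWord d k l p x i ≤ a)).card <
        ((Finset.Icc 1 (k + m)).filter (fun i => extWord d k l p x i ≤ b)).card := by
      intro a b hab hGb
      obtain ⟨i0, hi0⟩ := hgood b hGb
      apply Finset.card_lt_card
      constructor
      · exact Finset.monotone_filter_right _ (fun i _ hi => le_trans hi (le_of_lt hab))
      · intro hsub
        have hmem : (i0.1 + 1) ∈ (Finset.Icc 1 (k + m)).filter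
            (fun i => extWord d k l p x i ≤ b) := by
          rw [Finset.mem_filter, Finset.mem_Icc]
          refine ⟨⟨by omega, by have := i0.2; omega⟩, ?_⟩
          rw [extWord, dif_pos (by simpa using i0.2)]
          have : (⟨i0.1 + 1 - 1, by simpa using i0.2⟩ : Fin k) = i0 := by
            ext; simp
          rw [this, hi0]
        have := hsub hmem
        rw [Finset.mem_filter] at this
        rw [extWord, dif_pos (by simpa using i0.2)] at this
        have h2 : (⟨i0.1 + 1 - 1, by simpa using i0.2⟩ : Fin k) = i0 := by ext; simp
        rw [h2, hi0] at this
        exact absurd this.2 (not_le.mpr hab)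
    have heqm := heq ⟨m, hm⟩
    rw [hsplit x (fun i _ _ => rfl), hsplit x' (fun i h1 h2 => (hagree i h1 h2).symm)] at heqm
    have hceq : ((Finset.Icc 1 (k + m)).filter
          (fun i => extWord d k l p x i ≤ x ⟨m, hm⟩)).card =
        ((Finset.Icc 1 (k + m)).filter (fun i => extWord d k l p x i ≤ x' ⟨m, hm⟩)).card := by
      omega
    rcases lt_trichotomy (x ⟨m, hm⟩) (x' ⟨m, hm⟩) with h | h | h
    · exact absurd hceq (ne_of_lt (hmono _ _ h (hx' _)))
    · exact h
    · exact absurd hceq.symm (ne_of_lt (hmono _ _ h (hx _)))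

open Classical in
noncomputable def rankInv (d : A) (G : A → Prop) (k l : ℕ) (p : Fin k → A)
    (r : Fin l → ℕ) : Fin l → A :=
  if h : ∃ x : Fin l → A, (∀ j, G (x j)) ∧ rankWord d k l p x = r then h.choose else fun _ => d

lemma rankInv_rankWord {d : A} {G : A → Prop} {k l : ℕ} {p : Fin k → A} {x : Fin l → A}
    (hgood : ∀ a, G a → ∃ i : Fin k, p i = a) (hx : ∀ j, G (x j)) :
    rankInv d G k l p (rankWord d k l p x) = x := by
  rw [rankInv]
  have hex : ∃ y : Fin l → A, (∀ j, G (y j)) ∧ rankWord d k l p y = rankWord d k l p x :=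
    ⟨x, hx, rfl⟩
  rw [dif_pos hex]
  obtain ⟨hGy, hy⟩ := hex.choose_spec
  exact rankWord_inj G hgood hGy hx (fun j => congrFun hy j)
end RW


/-- Main theorem. -/
theorem condEntropy_rank_eq_limit {Ω A : Type*} [MeasurableSpace Ω]
    [Fintype A] [LinearOrder A] [MeasurableSpace A] [MeasurableSingletonClass A]
    (μ : Measure Ω) [IsProbabilityMeasure μ]
    (T : Ω → Ω) (hT : Ergodic T μ) (g : Ω → A) (hg : Measurable g)
    (S : ℕ → Ω → A) (hSdef : ∀ n ω, S n ω = g (T^[n - 1] ω)) :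
    ∀ l : ℕ, 1 ≤ l → ∃ c : ℝ,
      Filter.Tendsto
        (fun k : ℕ =>
          condShEntropy μ (fun ω => fun j : Fin l => rankVar S (k + 1 + j.1) ω)
            (fun ω => fun i : Fin k => S (i.1 + 1) ω))
        Filter.atTop (nhds c)
      ∧ Filter.Tendsto
          (fun k : ℕ =>
            condShEntropy μ (fun ω => fun j : Fin l => S (k + 1 + j.1) ω)
              (fun ω => fun i : Fin k => S (i.1 + 1) ω))
          Filter.atTop (nhds c) := by
  classical
  intro l hl
  have hTm : Measurable T := hT.toMeasurePreserving.measurable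
  have hTP : MeasurePreserving T μ μ := hT.toMeasurePreserving
  have hS : ∀ n, Measurable (S n) := by
    intro n
    have : S n = fun ω => g (T^[n - 1] ω) := funext (hSdef n)
    rw [this]
    exact hg.comp (hTm.iterate _)
  have hSpre : ∀ n (aa : A), MeasurableSet (S n ⁻¹' {aa}) :=
    fun n aa => hS n (measurableSet_singleton aa)
  -- shift identity
  have hshift : ∀ n, 1 ≤ n → ∀ ω, S n (T ω) = S (n + 1) ω := by
    intro n hn ω
    rw [hSdef, hSdef]
    have h1 : T^[n - 1] (T ω) = T^[n - 1 + 1] ω := (Function.iterate_succ_apply T (n - 1) ω).symm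
    have h2 : n - 1 + 1 = n + 1 - 1 := by omega
    rw [h1, h2]
  -- nonempty alphabet
  have hA : Nonempty A := by
    rcases isEmpty_or_nonempty A with h | h
    · have : IsEmpty Ω := ⟨fun ω => (h.false (g ω))⟩
      have h1 : μ Set.univ = 1 := measure_univ
      rw [Set.univ_eq_empty_iff.mpr this] at h1
      simp at h1
    · exact h
  obtain ⟨d⟩ := hA
  -- abbreviations for the block variables
  set Zk : ∀ k : ℕ, Ω → (Fin k → A) := fun k => fun ω => fun i : Fin k => S (i.1 + 1) ω with hZk
  have hPast : ∀ (k : ℕ) (pp : Fin k → A),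
      MeasurableSet ((fun ω => fun i : Fin k => S (i.1 + 1) ω) ⁻¹' {pp}) := by
    intro k pp
    have : (fun ω => fun i : Fin k => S (i.1 + 1) ω) ⁻¹' {pp}
        = ⋂ i : Fin k, (S (i.1 + 1)) ⁻¹' {pp i} := by
      ext ω
      simp [funext_iff]
    rw [this]
    exact MeasurableSet.iInter (fun i => hSpre _ _)
  have hXb : ∀ (k : ℕ) (x : Fin l → A),
      MeasurableSet ((fun ω => fun j : Fin l => S (k + 1 + j.1) ω) ⁻¹' {x}) := by
    intro k x
    have : (fun ω => fun j : Fin l => S (k + 1 + j.1) ω) ⁻¹' {x}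
        = ⋂ j : Fin l, (S (k + 1 + j.1)) ⁻¹' {x j} := by
      ext ω
      simp [funext_iff]
    rw [this]
    exact MeasurableSet.iInter (fun j => hSpre _ _)
  have hXbset : ∀ (k : ℕ) (B : Set (Fin l → A)),
      MeasurableSet ((fun ω => fun j : Fin l => S (k + 1 + j.1) ω) ⁻¹' B) := by
    intro k B
    have : (fun ω => fun j : Fin l => S (k + 1 + j.1) ω) ⁻¹' B
        = ⋃ x ∈ B, (fun ω => fun j : Fin l => S (k + 1 + j.1) ω) ⁻¹' {x} := by
      ext ω; simp
    rw [this]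
    exact MeasurableSet.biUnion B.to_countable (fun x _ => hXb k x)
  have hRank : ∀ n, Measurable (fun ω => rankVar S n ω) := by
    intro n
    have : (fun ω => rankVar S n ω)
        = fun ω => ∑ i ∈ Finset.Icc 1 n, if S i ω ≤ S n ω then 1 else 0 := by
      funext ω
      simp only [rankVar, Finset.card_filter]
    rw [this]
    apply Finset.measurable_sum
    intro i _
    have hms : MeasurableSet {ω | S i ω ≤ S n ω} := by
      have : {ω | S i ω ≤ S n ω} = (fun ω => (S i ω, S n ω)) ⁻¹' {q : A × A | q.1 ≤ q.2} := rfl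
      rw [this]
      exact ((hS i).prodMk (hS n)) ((Set.toFinite _).measurableSet)
    exact Measurable.ite hms measurable_const measurable_const
  have hRb : ∀ (k : ℕ) (r : Fin l → ℕ),
      MeasurableSet ((fun ω => fun j : Fin l => rankVar S (k + 1 + j.1) ω) ⁻¹' {r}) := by
    intro k r
    have : (fun ω => fun j : Fin l => rankVar S (k + 1 + j.1) ω) ⁻¹' {r}
        = ⋂ j : Fin l, (fun ω => rankVar S (k + 1 + j.1) ω) ⁻¹' {r j} := by
      ext ω
      simp [funext_iff]
    rw [this]
    exact MeasurableSet.iInter (fun j => hRank _ (measurableSet_singleton _))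
  -- the two sequences
  set a : ℕ → ℝ := fun k =>
    condShEntropy μ (fun ω => fun j : Fin l => S (k + 1 + j.1) ω)
      (fun ω => fun i : Fin k => S (i.1 + 1) ω) with ha_def
  set b : ℕ → ℝ := fun k =>
    condShEntropy μ (fun ω => fun j : Fin l => rankVar S (k + 1 + j.1) ω)
      (fun ω => fun i : Fin k => S (i.1 + 1) ω) with hb_def
  -- Part A : a is antitone
  have ha_mono : ∀ k, a (k + 1) ≤ a k := by
    intro k
    set e : (A × (Fin k → A)) ≃ (Fin (k + 1) → A) := Fin.consEquiv (fun _ => A) with he_def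
    have hpasteq : (fun ω => fun i : Fin (k + 1) => S (i.1 + 1) ω)
        = fun ω => e (S 1 ω, fun i : Fin k => S (i.1 + 2) ω) := by
      funext ω
      funext i
      induction i using Fin.cases with
      | zero => simp [he_def, Fin.consEquiv]
      | succ i' => simp [he_def, Fin.consEquiv]
    have step1 : a (k + 1) = condShEntropy μ (fun ω => fun j : Fin l => S (k + 1 + 1 + j.1) ω)
        (fun ω => (S 1 ω, fun i : Fin k => S (i.1 + 2) ω)) := by
      simp only [ha_def]
      rw [hpasteq]
      exact condShEntropy_recode _ _ e
    have step2 : condShEntropy μ (fun ω => fun j : Fin l => S (k + 1 + 1 + j.1) ω)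
          (fun ω => (S 1 ω, fun i : Fin k => S (i.1 + 2) ω))
        ≤ condShEntropy μ (fun ω => fun j : Fin l => S (k + 1 + 1 + j.1) ω)
          (fun ω => fun i : Fin k => S (i.1 + 2) ω) := by
      apply condShEntropy_pair_le
      · intro x
        have h1 : (fun ω => fun j : Fin l => S (k + 1 + 1 + j.1) ω)
            = (fun ω => fun j : Fin l => S ((k + 1) + 1 + j.1) ω) := rfl
        rw [h1]
        exact hXb (k + 1) x
      · exact fun aa => hSpre 1 aa
      · intro pp
        have : (fun ω => fun i : Fin k => S (i.1 + 2) ω) ⁻¹' {pp}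
            = ⋂ i : Fin k, (S (i.1 + 2)) ⁻¹' {pp i} := by
          ext ω
          simp [funext_iff]
        rw [this]
        exact MeasurableSet.iInter (fun i => hSpre _ _)
    have step3 : condShEntropy μ (fun ω => fun j : Fin l => S (k + 1 + 1 + j.1) ω)
          (fun ω => fun i : Fin k => S (i.1 + 2) ω)
        = a k := by
      have hY : (fun ω => fun j : Fin l => S (k + 1 + 1 + j.1) ω)
          = (fun ω => (fun ω' => fun j : Fin l => S (k + 1 + j.1) ω') (T ω)) := by
        funext ω
        funext j
        simp only
        rw [hshift (k + 1 + j.1) (by omega) ω]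
        congr 1
        omega
      have hZ : (fun ω => fun i : Fin k => S (i.1 + 2) ω)
          = (fun ω => (fun ω' => fun i : Fin k => S (i.1 + 1) ω') (T ω)) := by
        funext ω
        funext i
        simp only
        rw [hshift (i.1 + 1) (by omega) ω]
      rw [hY, hZ, ha_def]
      exact condShEntropy_comp_mp hTP _ _ (hXb k) (hPast k)
    calc a (k + 1) = _ := step1
      _ ≤ _ := step2
      _ = a k := step3
  have ha_anti : Antitone a := antitone_nat_of_succ_le ha_mono
  have ha_nonneg : ∀ k, 0 ≤ a k := by
    intro k
    exact condShEntropy_nonneg _ _ (hPast k)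
  have hbdd : BddBelow (Set.range a) := ⟨0, by rintro x ⟨k, rfl⟩; exact ha_nonneg k⟩
  set c : ℝ := ⨅ k, a k with hc_def
  have ha_tend : Filter.Tendsto a Filter.atTop (nhds c) := tendsto_atTop_ciInf ha_anti hbdd
  -- Part B : comparison between a and b
  set suppP : A → Prop := fun aa => μ (g ⁻¹' {aa}) ≠ 0 with hsuppP
  have hμS : ∀ n, 1 ≤ n → ∀ aa : A, μ (S n ⁻¹' {aa}) = μ (g ⁻¹' {aa}) := by
    intro n hn aa
    have : S n ⁻¹' {aa} = T^[n - 1] ⁻¹' (g ⁻¹' {aa}) := by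
      ext ω
      simp [hSdef n ω]
    rw [this]
    exact (hTP.iterate (n - 1)).measure_preimage (hg (measurableSet_singleton aa)).nullMeasurableSet
  have hnull : ∀ n, 1 ≤ n → μ {ω | ¬ suppP (S n ω)} = 0 := by
    intro n hn
    have hsub : {ω | ¬ suppP (S n ω)} ⊆ ⋃ aa ∈ {aa : A | ¬ suppP aa}, S n ⁻¹' {aa} := by
      intro ω hω
      simp only [Set.mem_iUnion, Set.mem_setOf_eq]
      exact ⟨S n ω, hω, rfl⟩
    apply measure_mono_null hsub
    apply (measure_biUnion_null_iff (Set.to_countable _)).mpr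
    intro aa haa
    rw [hμS n hn aa]
    simpa [hsuppP] using haa
  -- the "good past" predicate
  set Good : ∀ k : ℕ, (Fin k → A) → Prop :=
    fun k pp => ∀ aa, suppP aa → ∃ i : Fin k, pp i = aa with hGood
  set C : ℝ := 2 * (Fintype.card (Fin l → A)) with hC
  have hC0 : 0 ≤ C := by positivity
  -- per-past-comparison
  have hcompare : ∀ (k : ℕ) (pp : Fin k → A),
      shEntropy (μ[|(fun ω => fun i : Fin k => S (i.1 + 1) ω) ⁻¹' {pp}])
          (fun ω => fun j : Fin l => rankVar S (k + 1 + j.1) ω)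
        ≤ shEntropy (μ[|(fun ω => fun i : Fin k => S (i.1 + 1) ω) ⁻¹' {pp}])
          (fun ω => fun j : Fin l => S (k + 1 + j.1) ω)
      ∧ (Good k pp →
        shEntropy (μ[|(fun ω => fun i : Fin k => S (i.1 + 1) ω) ⁻¹' {pp}])
          (fun ω => fun j : Fin l => S (k + 1 + j.1) ω)
        ≤ shEntropy (μ[|(fun ω => fun i : Fin k => S (i.1 + 1) ω) ⁻¹' {pp}])
          (fun ω => fun j : Fin l => rankVar S (k + 1 + j.1) ω)) := by
    intro k pp
    set ν : Measure Ω := μ[|(fun ω => fun i : Fin k => S (i.1 + 1) ω) ⁻¹' {pp}] with hν_def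
    have hν1 : ∀ t, ν t ≤ 1 := cond_meas_le_one (hPast k pp) (measure_ne_top μ _)
    have hpast_ae : ∀ᵐ ω ∂ν, (fun i : Fin k => S (i.1 + 1) ω) = pp := by
      rw [ae_iff]
      have h1 : {ω | ¬ (fun i : Fin k => S (i.1 + 1) ω) = pp}
          = ((fun ω => fun i : Fin k => S (i.1 + 1) ω) ⁻¹' {pp})ᶜ := by
        ext ω; simp
      rw [h1, hν_def, ProbabilityTheory.cond_apply (hPast k pp)]
      simp
    have hsupp_ae : ∀ᵐ ω ∂ν, ∀ j : Fin l, suppP (S (k + 1 + j.1) ω) := by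
      rw [ae_all_iff]
      intro j
      rw [ae_iff]
      apply ProbabilityTheory.cond_absolutelyContinuous
      exact hnull (k + 1 + j.1) (by omega)
    -- a.e. identity : rank block = rankWord of the S block
    have hRW : ∀ᵐ ω ∂ν, (fun ω' => fun j : Fin l => rankVar S (k + 1 + j.1) ω') ω
        = (rankWord d k l pp ∘ (fun ω' => fun j : Fin l => S (k + 1 + j.1) ω')) ω := by
      filter_upwards [hpast_ae] with ω hω
      funext j
      exact rankVar_eq_rankWord (fun i => congrFun hω i) (fun j' => rfl) j
    constructor
    · -- rank entropy ≤ block entropy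
      calc shEntropy ν (fun ω => fun j : Fin l => rankVar S (k + 1 + j.1) ω)
          = shEntropy ν (rankWord d k l pp ∘ (fun ω' => fun j : Fin l => S (k + 1 + j.1) ω')) :=
            shEntropy_congr ν hRW
        _ ≤ shEntropy ν (fun ω' => fun j : Fin l => S (k + 1 + j.1) ω') := by
            apply shEntropy_comp_le ν _ Finset.univ hν1
            · intro x hx
              exact absurd (Finset.mem_univ x) hx
            · exact hXb k
    · -- good case : block entropy ≤ rank entropy
      intro hgoodpp
      have hXae : ∀ᵐ ω ∂ν, (fun ω' => fun j : Fin l => S (k + 1 + j.1) ω') ω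
          = (rankInv d suppP k l pp ∘
              (rankWord d k l pp ∘ (fun ω' => fun j : Fin l => S (k + 1 + j.1) ω'))) ω := by
        filter_upwards [hpast_ae, hsupp_ae] with ω hω hωs
        have := rankInv_rankWord (d := d) (G := suppP) (p := pp)
          (x := fun j : Fin l => S (k + 1 + j.1) ω) hgoodpp hωs
        simp only [Function.comp_apply]
        exact this.symm
      calc shEntropy ν (fun ω => fun j : Fin l => S (k + 1 + j.1) ω)
          = shEntropy ν (rankInv d suppP k l pp ∘
              (rankWord d k l pp ∘ (fun ω' => fun j : Fin l => S (k + 1 + j.1) ω'))) :=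
            shEntropy_congr ν hXae
        _ ≤ shEntropy ν (rankWord d k l pp ∘ (fun ω' => fun j : Fin l => S (k + 1 + j.1) ω')) := by
            apply shEntropy_comp_le ν _ (Finset.univ.image (rankWord d k l pp)) hν1
            · intro r hr
              ext ω
              simp only [Set.mem_preimage, Set.mem_singleton_iff, Set.mem_empty_iff_false,
                iff_false]
              intro hre
              exact hr (Finset.mem_image.mpr ⟨_, Finset.mem_univ _, hre⟩)
            · intro r
              exact hXbset k ((rankWord d k l pp) ⁻¹' {r})
        _ = shEntropy ν (fun ω => fun j : Fin l => rankVar S (k + 1 + j.1) ω) :=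
            (shEntropy_congr ν hRW).symm
  -- bad set measure
  set E : A → ℕ → Set Ω := fun aa k => {ω | ∀ i : Fin k, S (i.1 + 1) ω ≠ aa} with hE
  have hEmeas : ∀ aa k, MeasurableSet (E aa k) := by
    intro aa k
    have : E aa k = ⋂ i : Fin k, (S (i.1 + 1) ⁻¹' {aa})ᶜ := by
      ext ω; simp [hE]
    rw [this]
    exact MeasurableSet.iInter (fun i => (hSpre _ _).compl)
  set Bk : ℕ → ℝ := fun k =>
      ∑ aa ∈ Finset.univ.filter (fun aa => suppP aa), (μ (E aa k)).toReal with hBk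
  have hBk_nonneg : ∀ k, 0 ≤ Bk k :=
    fun k => Finset.sum_nonneg (fun aa _ => ENNReal.toReal_nonneg)
  -- b ≤ a and a ≤ b + C·Bk
  have hba : ∀ k, b k ≤ a k := by
    intro k
    simp only [ha_def, hb_def, condShEntropy]
    rw [tsum_fintype, tsum_fintype]
    apply Finset.sum_le_sum
    intro pp _
    exact mul_le_mul_of_nonneg_left (hcompare k pp).1 ENNReal.toReal_nonneg
  have hab : ∀ k, a k ≤ b k + C * Bk k := by
    intro k
    simp only [ha_def, hb_def, condShEntropy]
    rw [tsum_fintype, tsum_fintype]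
    have hsplit : ∀ pp : Fin k → A,
        (μ ((fun ω => fun i : Fin k => S (i.1 + 1) ω) ⁻¹' {pp})).toReal *
            shEntropy (μ[|(fun ω => fun i : Fin k => S (i.1 + 1) ω) ⁻¹' {pp}])
              (fun ω => fun j : Fin l => S (k + 1 + j.1) ω)
          ≤ (μ ((fun ω => fun i : Fin k => S (i.1 + 1) ω) ⁻¹' {pp})).toReal *
            shEntropy (μ[|(fun ω => fun i : Fin k => S (i.1 + 1) ω) ⁻¹' {pp}])
              (fun ω => fun j : Fin l => rankVar S (k + 1 + j.1) ω)
          + (if Good k pp then 0 else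
              (μ ((fun ω => fun i : Fin k => S (i.1 + 1) ω) ⁻¹' {pp})).toReal * C) := by
      intro pp
      by_cases hgood : Good k pp
      · rw [if_pos hgood, add_zero]
        exact mul_le_mul_of_nonneg_left ((hcompare k pp).2 hgood) ENNReal.toReal_nonneg
      · rw [if_neg hgood]
        have h1 : 0 ≤ (μ ((fun ω => fun i : Fin k => S (i.1 + 1) ω) ⁻¹' {pp})).toReal *
            shEntropy (μ[|(fun ω => fun i : Fin k => S (i.1 + 1) ω) ⁻¹' {pp}])
              (fun ω => fun j : Fin l => rankVar S (k + 1 + j.1) ω) := by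
          apply mul_nonneg ENNReal.toReal_nonneg
          exact shEntropy_nonneg _ _ (cond_meas_le_one (hPast k pp) (measure_ne_top μ _))
        have h2 : shEntropy (μ[|(fun ω => fun i : Fin k => S (i.1 + 1) ω) ⁻¹' {pp}])
            (fun ω => fun j : Fin l => S (k + 1 + j.1) ω) ≤ C := by
          rw [hC]
          exact shEntropy_le_card _ _ (cond_meas_le_one (hPast k pp) (measure_ne_top μ _))
        nlinarith [ENNReal.toReal_nonneg
          (a := μ ((fun ω => fun i : Fin k => S (i.1 + 1) ω) ⁻¹' {pp}))]
    calc (∑ pp : Fin k → A, (μ ((fun ω => fun i : Fin k => S (i.1 + 1) ω) ⁻¹' {pp})).toReal *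
            shEntropy (μ[|(fun ω => fun i : Fin k => S (i.1 + 1) ω) ⁻¹' {pp}])
              (fun ω => fun j : Fin l => S (k + 1 + j.1) ω))
        ≤ ∑ pp : Fin k → A,
            ((μ ((fun ω => fun i : Fin k => S (i.1 + 1) ω) ⁻¹' {pp})).toReal *
              shEntropy (μ[|(fun ω => fun i : Fin k => S (i.1 + 1) ω) ⁻¹' {pp}])
                (fun ω => fun j : Fin l => rankVar S (k + 1 + j.1) ω)
            + (if Good k pp then 0 else
                (μ ((fun ω => fun i : Fin k => S (i.1 + 1) ω) ⁻¹' {pp})).toReal * C)) :=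
          Finset.sum_le_sum (fun pp _ => hsplit pp)
      _ = (∑ pp : Fin k → A, (μ ((fun ω => fun i : Fin k => S (i.1 + 1) ω) ⁻¹' {pp})).toReal *
              shEntropy (μ[|(fun ω => fun i : Fin k => S (i.1 + 1) ω) ⁻¹' {pp}])
                (fun ω => fun j : Fin l => rankVar S (k + 1 + j.1) ω))
          + ∑ pp : Fin k → A, (if Good k pp then 0 else
              (μ ((fun ω => fun i : Fin k => S (i.1 + 1) ω) ⁻¹' {pp})).toReal * C) :=
          Finset.sum_add_distrib
      _ ≤ _ := by
          apply add_le_add le_rfl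
          -- bound the bad-past mass
          have h3 : ∑ pp : Fin k → A, (if Good k pp then 0 else
              (μ ((fun ω => fun i : Fin k => S (i.1 + 1) ω) ⁻¹' {pp})).toReal * C)
              = C * ∑ pp ∈ Finset.univ.filter (fun pp : Fin k → A => ¬ Good k pp),
                  (μ ((fun ω => fun i : Fin k => S (i.1 + 1) ω) ⁻¹' {pp})).toReal := by
            rw [Finset.mul_sum, Finset.sum_filter]
            congr 1
            funext pp
            by_cases hgood : Good k pp
            · rw [if_pos hgood, if_neg (not_not_intro hgood)]
            · rw [if_neg hgood, if_pos hgood, mul_comm]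
          rw [h3]
          apply mul_le_mul_of_nonneg_left _ hC0
          -- the bad-past union is contained in the union of "letter missing" events
          have h4 : ∑ pp ∈ Finset.univ.filter (fun pp : Fin k → A => ¬ Good k pp),
              (μ ((fun ω => fun i : Fin k => S (i.1 + 1) ω) ⁻¹' {pp})).toReal
              = (μ (⋃ pp ∈ Finset.univ.filter (fun pp : Fin k → A => ¬ Good k pp),
                  (fun ω => fun i : Fin k => S (i.1 + 1) ω) ⁻¹' {pp})).toReal := by
            rw [measure_biUnion_finset ?_ (fun pp _ => hPast k pp)]
            · rw [ENNReal.toReal_sum (fun pp _ => measure_ne_top μ _)]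
            · intro pp _ pp' _ hne
              simp only [Function.onFun]
              apply Set.disjoint_left.mpr
              intro ω h1 h2
              apply hne
              have e1 : (fun i : Fin k => S (i.1 + 1) ω) = pp := h1
              have e2 : (fun i : Fin k => S (i.1 + 1) ω) = pp' := h2
              rw [← e1, ← e2]
          rw [h4, hBk]
          have h5 : (⋃ pp ∈ Finset.univ.filter (fun pp : Fin k → A => ¬ Good k pp),
                (fun ω => fun i : Fin k => S (i.1 + 1) ω) ⁻¹' {pp})
              ⊆ ⋃ aa ∈ Finset.univ.filter (fun aa : A => suppP aa), E aa k := by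
            intro ω hω
            simp only [Set.mem_iUnion, Finset.mem_filter, Finset.mem_univ, true_and,
              Set.mem_preimage, Set.mem_singleton_iff, exists_prop] at hω ⊢
            obtain ⟨pp, hbad, hpp⟩ := hω
            have hbad' : ∃ aa, suppP aa ∧ ∀ i : Fin k, pp i ≠ aa := by
              by_contra hno
              push_neg at hno
              exact hbad hno
            obtain ⟨aa, haa, hnoi⟩ := hbad'
            refine ⟨aa, haa, ?_⟩
            simp only [hE, Set.mem_setOf_eq]
            intro i hSi
            exact hnoi i (by rw [← hpp]; exact hSi)
          calc (μ (⋃ pp ∈ Finset.univ.filter (fun pp : Fin k → A => ¬ Good k pp),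
                (fun ω => fun i : Fin k => S (i.1 + 1) ω) ⁻¹' {pp})).toReal
              ≤ (μ (⋃ aa ∈ Finset.univ.filter (fun aa : A => suppP aa), E aa k)).toReal := by
                apply ENNReal.toReal_mono (measure_ne_top μ _)
                exact measure_mono h5
            _ ≤ ∑ aa ∈ Finset.univ.filter (fun aa : A => suppP aa), (μ (E aa k)).toReal := by
                calc (μ (⋃ aa ∈ Finset.univ.filter (fun aa : A => suppP aa), E aa k)).toReal
                    ≤ (∑ aa ∈ Finset.univ.filter (fun aa : A => suppP aa), μ (E aa k)).toReal := by
                      apply ENNReal.toReal_mono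
                      · exact (ENNReal.sum_lt_top.mpr
                          (fun aa _ => measure_lt_top μ _)).ne
                      · exact measure_biUnion_finset_le _ _
                  _ = _ := ENNReal.toReal_sum (fun aa _ => measure_ne_top μ _)
  -- Bk tends to 0
  have hBk_tend : Filter.Tendsto Bk Filter.atTop (nhds 0) := by
    have hsum : ∀ aa ∈ Finset.univ.filter (fun aa : A => suppP aa),
        Filter.Tendsto (fun k => (μ (E aa k)).toReal) Filter.atTop (nhds 0) := by
      intro aa haa
      have hsuppaa : suppP aa := (Finset.mem_filter.mp haa).2
      -- the limit event
      have hanti : Antitone (E aa) := by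
        intro k k' hkk' ω hω
        intro i
        exact hω ⟨i.1, lt_of_lt_of_le i.2 hkk'⟩
      have hN : (⋂ k, E aa k) = ⋂ n : ℕ, (S (n + 1)) ⁻¹' {aa}ᶜ := by
        ext ω
        simp only [Set.mem_iInter, hE, Set.mem_setOf_eq, Set.mem_preimage, Set.mem_compl_iff,
          Set.mem_singleton_iff]
        constructor
        · intro h n
          exact h (n + 1) ⟨n, by omega⟩
        · intro h k i
          exact h i.1
      have hNmeas : MeasurableSet (⋂ n : ℕ, (S (n + 1)) ⁻¹' {aa}ᶜ) :=
        MeasurableSet.iInter (fun n => (hSpre _ _).compl)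
      have hNzero : μ (⋂ n : ℕ, (S (n + 1)) ⁻¹' {aa}ᶜ) = 0 := by
        have hsub : (⋂ n : ℕ, (S (n + 1)) ⁻¹' {aa}ᶜ)
            ⊆ T ⁻¹' (⋂ n : ℕ, (S (n + 1)) ⁻¹' {aa}ᶜ) := by
          intro ω hω
          simp only [Set.mem_preimage, Set.mem_iInter, Set.mem_compl_iff,
            Set.mem_singleton_iff] at hω ⊢
          intro n
          rw [hshift (n + 1) (by omega) ω]
          exact hω (n + 1)
        rcases hT.ae_empty_or_univ_of_ae_le_preimage hNmeas.nullMeasurableSet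
            (HasSubset.Subset.eventuallyLE hsub) with h | h
        · have := measure_congr h
          simpa using this
        · exfalso
          have h1 : μ (⋂ n : ℕ, (S (n + 1)) ⁻¹' {aa}ᶜ) = 1 := by
            rw [measure_congr h]
            exact measure_univ
          have h2 : μ (⋂ n : ℕ, (S (n + 1)) ⁻¹' {aa}ᶜ) ≤ μ ((S 1) ⁻¹' {aa}ᶜ) := by
            apply measure_mono
            intro ω hω
            exact Set.mem_iInter.mp hω 0
          have h3 : μ ((S 1) ⁻¹' {aa}ᶜ) < 1 := by
            have hc1 : (S 1) ⁻¹' {aa}ᶜ = ((S 1) ⁻¹' {aa})ᶜ := rfl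
            rw [hc1, measure_compl (hSpre 1 aa) (measure_ne_top μ _), measure_univ]
            rw [hμS 1 le_rfl aa]
            exact ENNReal.sub_lt_self ENNReal.one_ne_top one_ne_zero hsuppaa
          rw [h1] at h2
          exact absurd h2 (not_le.mpr h3)
      have htend : Filter.Tendsto (fun k => μ (E aa k)) Filter.atTop (nhds 0) := by
        have := tendsto_measure_iInter_atTop (μ := μ)
          (fun k => (hEmeas aa k).nullMeasurableSet) hanti ⟨0, measure_ne_top μ _⟩
        rw [hN, hNzero] at this
        exact this
      have := (ENNReal.tendsto_toReal (ENNReal.zero_ne_top)).comp htend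
      simpa [Function.comp_def] using this
    have := tendsto_finset_sum (Finset.univ.filter (fun aa : A => suppP aa))
      (fun aa haa => hsum aa haa)
    simpa [hBk] using this
  -- final squeeze
  refine ⟨c, ?_, ha_tend⟩
  have hlow : Filter.Tendsto (fun k => a k - C * Bk k) Filter.atTop (nhds c) := by
    have := ha_tend.sub ((tendsto_const_nhds (x := C)).mul hBk_tend)
    simpa using this
  apply tendsto_of_tendsto_of_tendsto_of_le_of_le hlow ha_tend
  · intro k
    have := hab k
    simp only
    linarith
  · intro k
    exact hba k
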